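/- Let (G,c) be a circularly-ordered group and g ∈ G. Then the 2-cocycles f_c and f_{c^g} represent the same class in H²(G;ℤ); i.e., there exists a function d : G → ℤ with f_c(a,b) − f_{c^g}(a,b) = d(a) + d(b) − d(ab) for all a,b ∈ G, where c^g(a₁,a₂,a₃) := c(a₁g, a₂g, a₃g). -/

import Mathlib

open scoped Classical

noncomputable section

/-- A (left-invariant) circular ordering on a group `G`, as an orientation cocycle. -/
def IsCircularOrdering {G : Type*} [Group G] (c : G → G → G → ℤ) : Prop :=
  (∀ a b d : G, c a b d = 0 ↔ a = b ∨ b = d ∨ a = d) ∧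
  (∀ a b d : G, c a b d = 1 ∨ c a b d = 0 ∨ c a b d = -1) ∧
  (∀ a₁ a₂ a₃ a₄ : G, c a₂ a₃ a₄ - c a₁ a₃ a₄ + c a₁ a₂ a₄ - c a₁ a₂ a₃ = 0) ∧
  (∀ g a₁ a₂ a₃ : G, c (g * a₁) (g * a₂) (g * a₃) = c a₁ a₂ a₃)

/-- The normalized 2-cocycle `f_c` associated to a circular ordering `c`:
`f_c a b = 0` if `a = 1` or `b = 1` or `c 1 a (a*b) = 1`, and `1` otherwise
(i.e. when `a*b = 1` with `a ≠ 1`, or `c 1 (a*b) a = 1`). -/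
def fc {G : Type*} [Group G] (c : G → G → G → ℤ) (a b : G) : ℤ :=
  if a = 1 ∨ b = 1 ∨ c 1 a (a * b) = 1 then 0 else 1

set_option maxHeartbeats 1600000 in
/-- `[f_c] = [f_{c^g}]` in `H²(G;ℤ)`: the difference is a coboundary. -/
theorem stmt11 {G : Type*} [Group G] (c : G → G → G → ℤ) (hc : IsCircularOrdering c)
    (g : G) :
    ∃ d : G → ℤ, ∀ a b : G,
      fc c a b - fc (fun a₁ a₂ a₃ => c (a₁ * g) (a₂ * g) (a₃ * g)) a b =
        d a + d b - d (a * b) := by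
  obtain ⟨hz, ht, hq, hl⟩ := hc
  have z12 : ∀ x y : G, c x x y = 0 := fun x y => (hz _ _ _).mpr (Or.inl rfl)
  have z23 : ∀ x y : G, c x y y = 0 := fun x y => (hz _ _ _).mpr (Or.inr (Or.inl rfl))
  have z13 : ∀ x y : G, c x y x = 0 := fun x y => (hz _ _ _).mpr (Or.inr (Or.inr rfl))
  have cyc : ∀ x y z : G, c y z x = c x y z := by
    intro x y z
    have h4 := hq x y z x
    have h1 := z13 x z
    have h2 := z13 x y
    omega
  have anti : ∀ x y z : G, c x z y = - c x y z := by
    intro x y z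
    have h4 := hq x y z y
    have h1 := z13 y z
    have h2 := z23 x y
    omega
  have bnd : ∀ x y z : G, -1 ≤ c x y z ∧ c x y z ≤ 1 := by
    intro x y z
    rcases ht x y z with h | h | h <;> rw [h] <;> omega
  have nz : ∀ {x y z : G}, x ≠ y → y ≠ z → x ≠ z → c x y z ≠ 0 := by
    intro x y z h1 h2 h3 h0
    rcases (hz _ _ _).mp h0 with h | h | h
    exacts [h1 h, h2 h, h3 h]
  refine ⟨fun x => fc c x g - (if c 1 (x * g) g = 1 ∨ (x * g = 1 ∧ ¬ g = 1) then 1 else 0), ?_⟩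
  intro a b
  by_cases hg : g = 1
  · subst hg
    simp [fc, z12, z13, z23]
  by_cases ha : a = 1
  · subst ha
    simp [fc, z12, z13, z23, hg]
  by_cases hb : b = 1
  · subst hb
    simp [fc, z12, z13, z23, hg]
  simp only [fc, one_mul, mul_assoc]
  by_cases habg : a * (b * g) = 1
  · -- abg = 1 (so ab ≠ 1, ag ≠ 1, bg ≠ 1)
    have hab : ¬ a * b = 1 := by
      intro h
      apply hg
      rw [← mul_assoc, h, one_mul] at habg
      exact habg
    have hag : ¬ a * g = 1 := by
      intro h
      apply hb
      have h2 : a * (b * g) = a * g := by rw [habg, h]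
      exact mul_eq_right.mp (mul_left_cancel h2)
    have hbg : ¬ b * g = 1 := by
      intro h
      apply ha
      rw [h, mul_one] at habg
      exact habg
    rw [habg]
    have f1 : c 1 (a * b) 1 = 0 := z13 1 (a * b)
    have f2 : c 1 1 g = 0 := z12 1 g
    have l1 : c g (a * g) 1 = c 1 g (a * g) := cyc 1 g (a * g)
    have l2 : c 1 b (b * g) = c 1 a (a * b) := by
      have h := hl a 1 b (b * g)
      rw [mul_one, habg] at h
      rw [← h]
      exact cyc 1 a (a * b)
    have l3 : c 1 (b * g) g = - c 1 a (a * g) := by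
      have h := hl a 1 g (b * g)
      rw [mul_one, habg] at h
      rw [anti 1 g (b * g), ← h]
      rw [cyc 1 a (a * g)]
    have l4 : c 1 (a * g) g = - c 1 g (a * g) := anti 1 g (a * g)
    have b1 := bnd 1 a (a * b)
    have b2 := bnd 1 a (a * g)
    have b3 := bnd 1 g (a * g)
    have n1 : c 1 a (a * b) ≠ 0 :=
      nz (Ne.symm ha) (fun h => hb (mul_eq_left.mp h.symm)) (fun h => hab h.symm)
    have n2 : c 1 a (a * g) ≠ 0 :=
      nz (Ne.symm ha) (fun h => hg (mul_eq_left.mp h.symm)) (fun h => hag h.symm)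
    have n3 : c 1 g (a * g) ≠ 0 :=
      nz (Ne.symm hg) (fun h => ha (mul_eq_right.mp h.symm)) (fun h => hag h.symm)
    simp only [z12, z13, z23, ha, hb, hg, hab, hag, hbg, f1, f2, false_or, or_false, false_and, and_false,
      true_and, and_true, eq_self_iff_true, true_or, or_true, not_false_iff,
      if_true, if_false]
    split_ifs <;> omega
  by_cases hab : a * b = 1
  · -- ab = 1
    have k : a * (b * g) = g := by rw [← mul_assoc, hab, one_mul]
    have hb' : b = a⁻¹ := eq_inv_of_mul_eq_one_right hab
    rw [k, hab]
    have f1 : c 1 a 1 = 0 := z13 1 a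
    have f2 : c g (a * g) g = 0 := z13 g (a * g)
    have f3 : c 1 g g = 0 := z23 1 g
    by_cases hag : a * g = 1
    · by_cases hbg : b * g = 1
      · -- 3d
        rw [hag, hbg]
        have f4 : c 1 b 1 = 0 := z13 1 b
        have f5 : c 1 1 g = 0 := z12 1 g
        simp [z12, z13, z23, ha, hb, hg]
      · -- 3b
        rw [hag]
        have f5 : c 1 1 g = 0 := z12 1 g
        have hga : ¬ a = g := by
          intro h
          apply hbg
          rw [hb', h, inv_mul_cancel]
        have lY2 : c 1 b (b * g) = c 1 g a := by
          have h := hl a 1 b (b * g)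
          rw [mul_one, hab, k] at h
          rw [← h, cyc g a 1, cyc 1 g a]
        have lT2 : c 1 (b * g) g = - c 1 g a := by
          have h := hl a 1 g (b * g)
          rw [mul_one, hag, k] at h
          rw [anti 1 g (b * g), ← h, cyc g a 1, cyc 1 g a]
        have bV := bnd 1 g a
        have nV : c 1 g a ≠ 0 :=
          nz (Ne.symm hg) (fun h => hga h.symm) (Ne.symm ha)
        simp only [z12, z13, z23, ha, hb, hg, hab, hag, hbg, f1, f2, f3, f5, false_or, or_false, false_and,
          and_false, true_and, and_true, eq_self_iff_true, true_or, or_true, not_false_iff,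
          if_true, if_false]
        split_ifs <;> omega
    · by_cases hbg : b * g = 1
      · -- 3c : g = a
        have hga : g = a := by
          rw [eq_inv_of_mul_eq_one_right hbg, hb', inv_inv]
        subst hga
        rw [hbg]
        have f4 : c 1 b 1 = 0 := z13 1 b
        have f5 : c 1 1 g = 0 := z12 1 g
        have lT1 : c 1 (g * g) g = - c 1 g (g * g) := anti 1 g (g * g)
        have bY := bnd 1 g (g * g)
        have nY : c 1 g (g * g) ≠ 0 :=
          nz (Ne.symm hg) (fun h => hg (mul_eq_left.mp h.symm)) (fun h => hag h.symm)
        simp only [z12, z13, z23, ha, hb, hg, hab, hag, hbg, f1, f2, f3, f4, f5, false_or, or_false, false_and,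
          and_false, true_and, and_true, eq_self_iff_true, true_or, or_true, not_false_iff,
          if_true, if_false]
        split_ifs <;> omega
      · -- 3a
        have hga : ¬ a = g := by
          intro h
          apply hbg
          rw [hb', h, inv_mul_cancel]
        have Q := hq 1 g a (a * g)
        have lY2 : c 1 b (b * g) = c 1 g a := by
          have h := hl a 1 b (b * g)
          rw [mul_one, hab, k] at h
          rw [← h, cyc g a 1, cyc 1 g a]
        have lT2 : c 1 (b * g) g = - c g a (a * g) := by
          have h := hl a 1 g (b * g)
          rw [mul_one, k] at h
          rw [anti 1 g (b * g), ← h, cyc g a (a * g)]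
        have lT1 : c 1 (a * g) g = - c 1 g (a * g) := anti 1 g (a * g)
        have b1 := bnd 1 a (a * g)
        have b2 := bnd 1 g (a * g)
        have b3 := bnd 1 g a
        have b4 := bnd g a (a * g)
        have n1 : c 1 a (a * g) ≠ 0 :=
          nz (Ne.symm ha) (fun h => hg (mul_eq_left.mp h.symm)) (fun h => hag h.symm)
        have n2 : c 1 g (a * g) ≠ 0 :=
          nz (Ne.symm hg) (fun h => ha (mul_eq_right.mp h.symm)) (fun h => hag h.symm)
        have n3 : c 1 g a ≠ 0 := nz (Ne.symm hg) (fun h => hga h.symm) (Ne.symm ha)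
        have n4 : c g a (a * g) ≠ 0 :=
          nz (fun h => hga h.symm) (fun h => hg (mul_eq_left.mp h.symm))
            (fun h => ha (mul_eq_right.mp h.symm))
        simp only [z12, z13, z23, ha, hb, hg, hab, hag, hbg, f1, f2, f3, false_or, or_false, false_and,
          and_false, true_and, and_true, eq_self_iff_true, true_or, or_true, not_false_iff,
          if_true, if_false]
        split_ifs <;> omega
  by_cases hag : a * g = 1
  · by_cases hbg : b * g = 1
    · -- 4b
      have k2 : a * (b * g) = a := by rw [hbg, mul_one]
      rw [k2, hag]
      have f1 : c 1 a 1 = 0 := z13 1 a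
      have f2 : c 1 1 g = 0 := z12 1 g
      have f3 : c 1 b 1 = 0 := z13 1 b
      have lX2 : c g 1 a = c 1 a g := by rw [cyc a g 1, cyc 1 a g]
      have lY3 : c 1 (a * b) a = - c 1 a (a * b) := anti 1 a (a * b)
      have b1 := bnd 1 a (a * b)
      have b2 := bnd 1 a g
      have n1 : c 1 a (a * b) ≠ 0 :=
        nz (Ne.symm ha) (fun h => hb (mul_eq_left.mp h.symm)) (fun h => hab h.symm)
      simp only [z12, z13, z23, ha, hb, hg, hab, hag, hbg, habg, f1, f2, f3, false_or, or_false, false_and,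
        and_false, true_and, and_true, eq_self_iff_true, true_or, or_true, not_false_iff,
        if_true, if_false]
      split_ifs <;> omega
    · -- 4a
      rw [hag]
      have f1 : c 1 a 1 = 0 := z13 1 a
      have f2 : c 1 1 g = 0 := z12 1 g
      have Q := hq 1 a (a * b) (a * (b * g))
      have lX2 : c g 1 (a * (b * g)) = c 1 (a * (b * g)) g := by
        rw [cyc (a * (b * g)) g 1, cyc 1 (a * (b * g)) g]
      have lY2 : c 1 b (b * g) = c a (a * b) (a * (b * g)) := by
        have h := hl a 1 b (b * g)
        rw [mul_one] at h
        exact h.symm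
      have lT2 : c 1 (b * g) g = c 1 a (a * (b * g)) := by
        have h := hl a 1 g (b * g)
        rw [mul_one, hag] at h
        rw [anti 1 g (b * g), ← h, cyc (a * (b * g)) a 1, cyc 1 (a * (b * g)) a,
          anti 1 a (a * (b * g))]
        ring
      have b1 := bnd 1 a (a * b)
      have b2 := bnd a (a * b) (a * (b * g))
      have b3 := bnd 1 (a * b) (a * (b * g))
      have b4 := bnd 1 a (a * (b * g))
      have b5 := bnd 1 (a * (b * g)) g
      have n1 : c 1 a (a * b) ≠ 0 :=
        nz (Ne.symm ha) (fun h => hb (mul_eq_left.mp h.symm)) (fun h => hab h.symm)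
      have n2 : c a (a * b) (a * (b * g)) ≠ 0 :=
        nz (fun h => hb (mul_eq_left.mp h.symm))
          (fun h => hg (mul_eq_left.mp (mul_left_cancel h).symm))
          (fun h => hbg (mul_eq_left.mp h.symm))
      have n3 : c 1 (a * b) (a * (b * g)) ≠ 0 :=
        nz (fun h => hab h.symm)
          (fun h => hg (mul_eq_left.mp (mul_left_cancel h).symm))
          (fun h => habg h.symm)
      have n4 : c 1 a (a * (b * g)) ≠ 0 :=
        nz (Ne.symm ha) (fun h => hbg (mul_eq_left.mp h.symm))
          (fun h => habg h.symm)
      have n5 : c 1 (a * (b * g)) g ≠ 0 :=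
        nz (fun h => habg h.symm)
          (fun h => hab (mul_eq_right.mp (by rw [← mul_assoc] at h; exact h)))
          (Ne.symm hg)
      simp only [z12, z13, z23, ha, hb, hg, hab, hag, hbg, habg, f1, f2, false_or, or_false, false_and,
        and_false, true_and, and_true, eq_self_iff_true, true_or, or_true, not_false_iff,
        if_true, if_false]
      split_ifs <;> omega
  · by_cases hbg : b * g = 1
    · -- 5
      have k2 : a * (b * g) = a := by rw [hbg, mul_one]
      have hb'' : b = g⁻¹ := eq_inv_of_mul_eq_one_left hbg
      rw [k2, hbg]
      have f3 : c 1 b 1 = 0 := z13 1 b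
      have f5 : c 1 1 g = 0 := z12 1 g
      have Q := hq 1 g a (a * g)
      have lX2 : c g (a * g) a = - c g a (a * g) := by
        rw [cyc a g (a * g), anti a (a * g) g, cyc g a (a * g)]
      have lY3 : c 1 (a * b) a = - c 1 a (a * b) := anti 1 a (a * b)
      have lT3 : c 1 a g = - c 1 g a := anti 1 g a
      have lT1 : c 1 (a * g) g = - c 1 g (a * g) := anti 1 g (a * g)
      have b1 := bnd 1 a (a * b)
      have b2 := bnd 1 a (a * g)
      have b3 := bnd 1 g (a * g)
      have b4 := bnd 1 g a
      have b5 := bnd g a (a * g)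
      have n1 : c 1 a (a * b) ≠ 0 :=
        nz (Ne.symm ha) (fun h => hb (mul_eq_left.mp h.symm)) (fun h => hab h.symm)
      have n2 : c 1 a (a * g) ≠ 0 :=
        nz (Ne.symm ha) (fun h => hg (mul_eq_left.mp h.symm)) (fun h => hag h.symm)
      have n3 : c 1 g (a * g) ≠ 0 :=
        nz (Ne.symm hg) (fun h => ha (mul_eq_right.mp h.symm)) (fun h => hag h.symm)
      have n4 : c 1 g a ≠ 0 :=
        nz (Ne.symm hg) (fun h => hab (by rw [hb'', ← h, mul_inv_cancel])) (Ne.symm ha)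
      have n5 : c g a (a * g) ≠ 0 :=
        nz (fun h => hab (by rw [hb'', h, mul_inv_cancel]))
          (fun h => hg (mul_eq_left.mp h.symm))
          (fun h => ha (mul_eq_right.mp h.symm))
      simp only [z12, z13, z23, ha, hb, hg, hab, hag, hbg, habg, f3, f5, false_or, or_false, false_and,
        and_false, true_and, and_true, eq_self_iff_true, true_or, or_true, not_false_iff,
        if_true, if_false]
      split_ifs <;> omega
    · -- generic
      have Q1 := hq 1 g (a * g) (a * (b * g))
      have Q2 := hq 1 a (a * b) (a * (b * g))
      have Q3 := hq 1 a (a * g) (a * (b * g))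
      have lY2 : c 1 b (b * g) = c a (a * b) (a * (b * g)) := by
        have h := hl a 1 b (b * g)
        rw [mul_one] at h
        exact h.symm
      have lT2 : c 1 (b * g) g = - c a (a * g) (a * (b * g)) := by
        have h := hl a 1 g (b * g)
        rw [mul_one] at h
        rw [anti 1 g (b * g), ← h]
      have lT1 : c 1 (a * g) g = - c 1 g (a * g) := anti 1 g (a * g)
      have lT3 : c 1 (a * (b * g)) g = - c 1 g (a * (b * g)) := anti 1 g (a * (b * g))
      have b1 := bnd 1 a (a * b)
      have b2 := bnd g (a * g) (a * (b * g))
      have b3 := bnd 1 a (a * g)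
      have b4 := bnd a (a * b) (a * (b * g))
      have b5 := bnd 1 (a * b) (a * (b * g))
      have b6 := bnd 1 g (a * g)
      have b7 := bnd a (a * g) (a * (b * g))
      have b8 := bnd 1 g (a * (b * g))
      have b9 := bnd 1 (a * g) (a * (b * g))
      have b10 := bnd 1 a (a * (b * g))
      have n1 : c 1 a (a * b) ≠ 0 :=
        nz (Ne.symm ha) (fun h => hb (mul_eq_left.mp h.symm)) (fun h => hab h.symm)
      have n2 : c g (a * g) (a * (b * g)) ≠ 0 :=
        nz (fun h => ha (mul_eq_right.mp h.symm))
          (fun h => hb (mul_eq_right.mp (mul_left_cancel h).symm))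
          (fun h => hab (mul_eq_right.mp (by rw [← mul_assoc] at h; exact h.symm)))
      have n3 : c 1 a (a * g) ≠ 0 :=
        nz (Ne.symm ha) (fun h => hg (mul_eq_left.mp h.symm)) (fun h => hag h.symm)
      have n4 : c a (a * b) (a * (b * g)) ≠ 0 :=
        nz (fun h => hb (mul_eq_left.mp h.symm))
          (fun h => hg (mul_eq_left.mp (mul_left_cancel h).symm))
          (fun h => hbg (mul_eq_left.mp h.symm))
      have n5 : c 1 (a * b) (a * (b * g)) ≠ 0 :=
        nz (fun h => hab h.symm)
          (fun h => hg (mul_eq_left.mp (mul_left_cancel h).symm))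
          (fun h => habg h.symm)
      have n6 : c 1 g (a * g) ≠ 0 :=
        nz (Ne.symm hg) (fun h => ha (mul_eq_right.mp h.symm)) (fun h => hag h.symm)
      have n7 : c a (a * g) (a * (b * g)) ≠ 0 :=
        nz (fun h => hg (mul_eq_left.mp h.symm))
          (fun h => hb (mul_eq_right.mp (mul_left_cancel h).symm))
          (fun h => hbg (mul_eq_left.mp h.symm))
      have n8 : c 1 g (a * (b * g)) ≠ 0 :=
        nz (Ne.symm hg)
          (fun h => hab (mul_eq_right.mp (by rw [← mul_assoc] at h; exact h.symm)))
          (fun h => habg h.symm)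
      simp only [z12, z13, z23, ha, hb, hg, hab, hag, hbg, habg, false_or, or_false, false_and,
        and_false, true_and, and_true, eq_self_iff_true, true_or, or_true, not_false_iff,
        if_true, if_false]
      split_ifs <;> omega
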